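/- arXiv:1608.02279 — 4 statements merged into one kernel-verified Lean document; each statement's English description precedes it below -/
import Mathlib

section
/- Let τ be a set partition of [k] and suppose τ contains a set partition P of [k'] such that the number of indices i with 1 ≤ i ≤ k' - 1 for which i and i+1 lie in different blocks of P is strictly less than r', where 1 ≤ r' < k'. Then there exists a real constant c > 0 such that for all positive integers n, A_n(τ) ≥ c^n · n^(n(1 - 1/(k'-r'))). -/
/-- `i` and `j` lie in the same block of the set partition `P` of `[n] = {1, …, n}`. -/
def SameBlock {n : ℕ} (P : Finpartition (Finset.Icc 1 n)) (i j : ℕ) : Prop :=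
  ∃ B ∈ P.parts, i ∈ B ∧ j ∈ B

instance {n : ℕ} (P : Finpartition (Finset.Icc 1 n)) (i j : ℕ) : Decidable (SameBlock P i j) :=
  inferInstanceAs (Decidable (∃ B ∈ P.parts, i ∈ B ∧ j ∈ B))

/-- The set partition `σ` of `[n]` contains the set partition `τ` of `[k]`: there is a
strictly increasing map `f : [k] → [n]` such that `i, j` lie in the same block of `τ`
iff `f i, f j` lie in the same block of `σ`.  Otherwise `σ` avoids `τ`. -/
def SetPartContains {n k : ℕ} (σ : Finpartition (Finset.Icc 1 n))
    (τ : Finpartition (Finset.Icc 1 k)) : Prop :=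
  ∃ f : ℕ → ℕ,
    (∀ i ∈ Finset.Icc 1 k, f i ∈ Finset.Icc 1 n) ∧
    (∀ i ∈ Finset.Icc 1 k, ∀ j ∈ Finset.Icc 1 k, i < j → f i < f j) ∧
    (∀ i ∈ Finset.Icc 1 k, ∀ j ∈ Finset.Icc 1 k,
      (SameBlock τ i j ↔ SameBlock σ (f i) (f j)))

/-- `A n τ` is the number of set partitions of `[n]` avoiding `τ`. -/
noncomputable def A (n : ℕ) {k : ℕ} (τ : Finpartition (Finset.Icc 1 k)) : ℕ :=
  Nat.card {σ : Finpartition (Finset.Icc 1 n) // ¬ SetPartContains σ τ}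

/-- `τ` is the layered partition `L_{a 0, …, a (r-1)}` of `[k]`, whose blocks are the
consecutive intervals `{1, …, a 0}, {a 0 + 1, …, a 0 + a 1}, …` of lengths `a 0, …, a (r-1)`. -/
def IsLayered {k : ℕ} (r : ℕ) (a : ℕ → ℕ) (τ : Finpartition (Finset.Icc 1 k)) : Prop :=
  τ.parts = (Finset.range r).image
    (fun j => Finset.Icc ((∑ i ∈ Finset.range j, a i) + 1) (∑ i ∈ Finset.range (j + 1), a i))

/-- A uniform set partition of `[n]` with block size `m`: it consists of `n/m` blocks each of
size `m`, and for every `0 ≤ j < m` the interval `S_j = {j·(n/m)+1, …, (j+1)·(n/m)}` contains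
exactly one element from each block. -/
def IsUniform (n m : ℕ) (σ : Finpartition (Finset.Icc 1 n)) : Prop :=
  σ.parts.card = n / m ∧ (∀ B ∈ σ.parts, B.card = m) ∧
    ∀ j < m, ∀ B ∈ σ.parts,
      (Finset.Icc (j * (n / m) + 1) ((j + 1) * (n / m)) ∩ B).card = 1

/-- `P` is the permutation partition of `[2m]` associated to the permutation `π` of `[m]`:
its blocks are `{i, m + π i}` for `i ∈ [m]` (with `Fin m` representing `[m]` via `i ↦ i + 1`). -/
def IsPermPartition (m : ℕ) (π : Equiv.Perm (Fin m))
    (P : Finpartition (Finset.Icc 1 (2 * m))) : Prop :=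
  P.parts = Finset.univ.image
    (fun i : Fin m => ({(i : ℕ) + 1, m + (π i : ℕ) + 1} : Finset ℕ))

open Finset Real

/-- Partition of `Icc 1 n` into fibers of `lab`. -/
def fiberPart (n : ℕ) (lab : ℕ → ℕ) : Finpartition (Finset.Icc 1 n) :=
  Finpartition.ofErase
    ((Finset.Icc 1 n).image fun x => (Finset.Icc 1 n).filter fun y => lab y = lab x)
    (by
      rw [Finset.supIndep_iff_pairwiseDisjoint]
      intro B hB C hC hne
      simp only [Finset.coe_image, Set.mem_image] at hB hC
      obtain ⟨x, hx, rfl⟩ := hB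
      obtain ⟨y, hy, rfl⟩ := hC
      intro D hD1 hD2 z hz
      have h1 := hD1 hz
      have h2 := hD2 hz
      simp only [id, Finset.mem_filter] at h1 h2
      exact absurd (by
        ext w
        simp only [Finset.mem_filter, h1.2 ▸ h2.2]) hne)
    (by
      apply le_antisymm
      · intro z hz
        simp only [Finset.mem_sup, Finset.mem_image] at hz
        obtain ⟨B, ⟨x, hx, rfl⟩, hzB⟩ := hz
        exact (Finset.mem_filter.1 hzB).1
      · intro z hz
        rw [Finset.mem_sup]
        exact ⟨_, Finset.mem_image_of_mem _ hz, Finset.mem_filter.2 ⟨hz, rfl⟩⟩)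

theorem sameBlock_fiberPart (n : ℕ) (lab : ℕ → ℕ) (x y : ℕ) :
    SameBlock (fiberPart n lab) x y ↔
      x ∈ Finset.Icc 1 n ∧ y ∈ Finset.Icc 1 n ∧ lab x = lab y := by
  constructor
  · rintro ⟨B, hB, hxB, hyB⟩
    have hB' : B ∈ (Finset.Icc 1 n).image
        fun x => (Finset.Icc 1 n).filter fun y => lab y = lab x :=
      Finset.mem_of_mem_erase hB
    obtain ⟨z, _, rfl⟩ := Finset.mem_image.1 hB'
    simp only [Finset.mem_filter] at hxB hyB
    exact ⟨hxB.1, hyB.1, hxB.2.trans hyB.2.symm⟩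
  · rintro ⟨hx, hy, hl⟩
    refine ⟨(Finset.Icc 1 n).filter fun y => lab y = lab x, ?_, ?_, ?_⟩
    · apply Finset.mem_erase.2
      refine ⟨?_, Finset.mem_image_of_mem _ hx⟩
      rw [bot_eq_empty, ← Finset.nonempty_iff_ne_empty]
      exact ⟨x, Finset.mem_filter.2 ⟨hx, rfl⟩⟩
    · exact Finset.mem_filter.2 ⟨hx, rfl⟩
    · exact Finset.mem_filter.2 ⟨hy, hl.symm⟩

/-- block label of `x` in the uniform-type partition parameterized by perms `p`. -/
def lab (m N : ℕ) (p : ℕ → Equiv.Perm (Fin N)) (x : ℕ) : ℕ :=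
  if h : 0 < N ∧ 1 ≤ x ∧ x ≤ m * N then
    ((p ((x - 1) / N)).symm ⟨(x - 1) % N, Nat.mod_lt _ h.1⟩ : Fin N)
  else x + N

theorem lab_lt {m N : ℕ} (p : ℕ → Equiv.Perm (Fin N)) {x : ℕ}
    (h : 0 < N ∧ 1 ≤ x ∧ x ≤ m * N) : lab m N p x < N := by
  rw [lab, dif_pos h]; exact Fin.is_lt _

theorem lab_of_not {m N : ℕ} (p : ℕ → Equiv.Perm (Fin N)) {x : ℕ}
    (h : ¬ (0 < N ∧ 1 ≤ x ∧ x ≤ m * N)) : lab m N p x = x + N := by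
  rw [lab, dif_neg h]

/-- two structured elements with the same label in the same interval are equal -/
theorem lab_inj_interval {m N : ℕ} (p : ℕ → Equiv.Perm (Fin N)) {x y : ℕ}
    (hx : 0 < N ∧ 1 ≤ x ∧ x ≤ m * N) (hy : 0 < N ∧ 1 ≤ y ∧ y ≤ m * N)
    (hl : lab m N p x = lab m N p y) (hj : (x - 1) / N = (y - 1) / N) : x = y := by
  rw [lab, dif_pos hx, lab, dif_pos hy, hj] at hl
  have h2 := (p ((y - 1) / N)).symm.injective (Fin.val_injective hl)
  have h3 : (x - 1) % N = (y - 1) % N := congrArg Fin.val h2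
  have h4 := Nat.div_add_mod (x - 1) N
  have h5 := Nat.div_add_mod (y - 1) N
  rw [hj] at h4
  omega

theorem lab_step {m N n : ℕ} (p : ℕ → Equiv.Perm (Fin N)) {x y : ℕ}
    (hmn : m * N ≤ n) (hx : x ∈ Finset.Icc 1 n) (hy : y ∈ Finset.Icc 1 n) (hxy : x < y)
    (hl : lab m N p x = lab m N p y) :
    y ≤ m * N ∧ (x - 1) / N < (y - 1) / N := by
  simp only [Finset.mem_Icc] at hx hy
  by_cases hsx : 0 < N ∧ 1 ≤ x ∧ x ≤ m * N
  · by_cases hsy : 0 < N ∧ 1 ≤ y ∧ y ≤ m * N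
    · refine ⟨hsy.2.2, ?_⟩
      rcases lt_trichotomy ((x - 1) / N) ((y - 1) / N) with h | h | h
      · exact h
      · exact absurd (lab_inj_interval p hsx hsy hl h) (Nat.ne_of_lt hxy)
      · have := Nat.div_le_div_right (c := N) (show x - 1 ≤ y - 1 by omega)
        omega
    · have h1 := lab_lt (m := m) p hsx
      rw [lab_of_not p hsy] at hl
      omega
  · by_cases hsy : 0 < N ∧ 1 ≤ y ∧ y ≤ m * N
    · have h1 := lab_lt (m := m) p hsy
      rw [lab_of_not p hsx] at hl
      omega
    · rw [lab_of_not p hsx, lab_of_not p hsy] at hl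
      omega

theorem setPartContains_trans {n k k' : ℕ} {σ : Finpartition (Finset.Icc 1 n)}
    {τ : Finpartition (Finset.Icc 1 k)} {Q : Finpartition (Finset.Icc 1 k')}
    (h1 : SetPartContains σ τ) (h2 : SetPartContains τ Q) : SetPartContains σ Q := by
  obtain ⟨f, hf1, hf2, hf3⟩ := h1
  obtain ⟨g, hg1, hg2, hg3⟩ := h2
  refine ⟨f ∘ g, fun i hi => hf1 _ (hg1 i hi), fun i hi j hj hij =>
    hf2 _ (hg1 i hi) _ (hg1 j hj) (hg2 i hi j hj hij), fun i hi j hj => ?_⟩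
  exact (hg3 i hi j hj).trans (hf3 _ (hg1 i hi) _ (hg1 j hj))

theorem lab_formula {m N : ℕ} (p : ℕ → Equiv.Perm (Fin N)) {j c : ℕ}
    (hj : j < m) (hc : c < N) :
    lab m N p (j * N + c + 1) = ((p j).symm ⟨c, hc⟩ : Fin N) := by
  have hN : 0 < N := by omega
  have hle : j * N + c + 1 ≤ m * N := by
    have h1 : (j + 1) * N ≤ m * N := Nat.mul_le_mul_right N hj
    have h2 : (j + 1) * N = j * N + N := by ring
    omega
  have hsub : j * N + c + 1 - 1 = N * j + c := by
    rw [Nat.mul_comm]; omega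
  have hdiv : (j * N + c + 1 - 1) / N = j := by
    rw [hsub, Nat.mul_add_div hN, Nat.div_eq_of_lt hc, Nat.add_zero]
  have hmod : (j * N + c + 1 - 1) % N = c := by
    rw [hsub, Nat.mul_add_mod, Nat.mod_eq_of_lt hc]
  rw [lab, dif_pos ⟨hN, by omega, hle⟩, hdiv]
  exact congrArg (fun t => ((p j).symm t : ℕ)) (Fin.ext hmod)

theorem mem_of_formula {m N n : ℕ} (hmn : m * N ≤ n) {j c : ℕ} (hj : j < m) (hc : c < N) :
    j * N + c + 1 ∈ Finset.Icc 1 n := by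
  rw [Finset.mem_Icc]
  have h1 : (j + 1) * N ≤ m * N := Nat.mul_le_mul_right N hj
  have h2 : (j + 1) * N = j * N + N := by ring
  omega

def pfun (m N : ℕ) (F : Fin (m - 1) → Equiv.Perm (Fin N)) (j : ℕ) : Equiv.Perm (Fin N) :=
  if h : 1 ≤ j ∧ j - 1 < m - 1 then F ⟨j - 1, h.2⟩ else 1

theorem pfun_zero (m N : ℕ) (F : Fin (m - 1) → Equiv.Perm (Fin N)) : pfun m N F 0 = 1 := by
  rw [pfun, dif_neg]; omega

theorem pfun_succ (m N : ℕ) (F : Fin (m - 1) → Equiv.Perm (Fin N)) (j : Fin (m - 1)) :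
    pfun m N F (j.val + 1) = F j := by
  rw [pfun, dif_pos ⟨by omega, by simpa using j.isLt⟩]
  exact congrArg F (Fin.ext (by simp))

theorem lab_inj {m N n : ℕ} (hm : 0 < m) (hmn : m * N ≤ n) :
    Function.Injective (fun F : Fin (m - 1) → Equiv.Perm (Fin N) =>
      fiberPart n (lab m N (pfun m N F))) := by
  intro F G hFG
  simp only at hFG
  funext j
  apply Equiv.ext
  intro i
  have hj1m : j.val + 1 < m := by have := j.isLt; omega
  set cF : ℕ := ((F j) i : ℕ) with hcF
  have hcFN : cF < N := Fin.is_lt _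
  have hiN : (i : ℕ) < N := i.isLt
  -- labels under pfun F
  have hlabF0 : lab m N (pfun m N F) (0 * N + i.val + 1) = i.val := by
    rw [lab_formula (pfun m N F) hm hiN, pfun_zero]
    simp
    rfl
  have hlabFy : lab m N (pfun m N F) ((j.val + 1) * N + cF + 1) = i.val := by
    rw [lab_formula (pfun m N F) hj1m hcFN, pfun_succ]
    have he : (⟨cF, hcFN⟩ : Fin N) = F j i := Fin.ext rfl
    rw [he, Equiv.symm_apply_apply]
  -- same block in fiberPart for F
  have hsb : SameBlock (fiberPart n (lab m N (pfun m N F)))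
      (0 * N + i.val + 1) ((j.val + 1) * N + cF + 1) := by
    rw [sameBlock_fiberPart]
    exact ⟨mem_of_formula hmn hm hiN, mem_of_formula hmn hj1m hcFN,
      by rw [hlabF0, hlabFy]⟩
  rw [hFG] at hsb
  obtain ⟨_, _, hlabs⟩ := (sameBlock_fiberPart _ _ _ _).1 hsb
  rw [lab_formula (pfun m N G) hm hiN, pfun_zero,
      lab_formula (pfun m N G) hj1m hcFN, pfun_succ] at hlabs
  have h1 : ((G j).symm ⟨cF, hcFN⟩ : Fin N) = i := by
    apply Fin.ext
    rw [← hlabs]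
    rfl
  calc F j i = ⟨cF, hcFN⟩ := Fin.ext rfl
    _ = G j i := by rw [← h1, Equiv.apply_symm_apply]

theorem fiberPart_avoids {m N n k' : ℕ} (p : ℕ → Equiv.Perm (Fin N))
    (Q : Finpartition (Finset.Icc 1 k')) (hm : 0 < m) (hmn : m * N ≤ n)
    (hT : m ≤ ((Finset.Icc 1 (k' - 1)).filter fun i => SameBlock Q i (i + 1)).card) :
    ¬ SetPartContains (fiberPart n (lab m N p)) Q := by
  rintro ⟨f, hmem, hmono, hiff⟩
  set T := (Finset.Icc 1 (k' - 1)).filter fun i => SameBlock Q i (i + 1) with hTdef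
  set g : ℕ → ℕ := fun i => min m ((f i - 1) / N) with hgdef
  have hgi : ∀ i, g i = min m ((f i - 1) / N) := fun _ => rfl
  have hk' : 1 ≤ k' := by
    by_contra h
    have : k' - 1 = 0 := by omega
    rw [this] at hTdef
    simp [hTdef] at hT
    omega
  -- basic step facts
  have hstep : ∀ i, 1 ≤ i → i ≤ k' - 1 →
      (g i ≤ g (i + 1)) ∧ (i ∈ T → g i < g (i + 1) ∧ g (i + 1) < m) := by
    intro i h1 h2
    have hi : i ∈ Finset.Icc 1 k' := by simp; omega
    have hi1 : i + 1 ∈ Finset.Icc 1 k' := by simp; omega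
    have hflt : f i < f (i + 1) := hmono i hi (i + 1) hi1 (Nat.lt_succ_self i)
    have hdivle : (f i - 1) / N ≤ (f (i + 1) - 1) / N :=
      Nat.div_le_div_right (by omega)
    constructor
    · rw [hgi, hgi]; omega
    · intro hiT
      have hsb : SameBlock Q i (i + 1) := (Finset.mem_filter.1 hiT).2
      have hsb' : SameBlock (fiberPart n (lab m N p)) (f i) (f (i + 1)) :=
        (hiff i hi (i + 1) hi1).1 hsb
      obtain ⟨hfx, hfy, hl⟩ := (sameBlock_fiberPart _ _ _ _).1 hsb'
      obtain ⟨hy, hdiv⟩ := lab_step p hmn hfx hfy hflt hl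
      have hN : 0 < N := by
        rcases Nat.eq_zero_or_pos N with h | h
        · exfalso
          have h7 := Finset.mem_Icc.1 hfy
          have h8 : m * N = 0 := by rw [h, Nat.mul_zero]
          omega
        · exact h
      have hdivlt : (f (i + 1) - 1) / N < m := by
        rw [Nat.div_lt_iff_lt_mul hN]
        have h6 := Finset.mem_Icc.1 hfy
        have hcomm : N * m = m * N := Nat.mul_comm N m
        omega
      rw [hgi, hgi]
      omega
  -- counting claim
  have claim : ∀ j, j ≤ k' - 1 → (T.filter fun t => t ≤ j).card ≤ g (j + 1) := by
    intro j
    induction j with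
    | zero =>
      intro _
      have h0 : (T.filter fun t => t ≤ 0) = ∅ := by
        apply Finset.filter_eq_empty_iff.2
        intro t ht
        have := Finset.mem_Icc.1 (Finset.mem_filter.1 ht).1
        omega
      rw [h0]
      simp
    | succ j ih =>
      intro hj
      have ihj := ih (by omega)
      by_cases hjT : j + 1 ∈ T
      · have hs := (hstep (j + 1) (by omega) hj).2 hjT
        have hsub : (T.filter fun t => t ≤ j + 1) ⊆ insert (j + 1) (T.filter fun t => t ≤ j) := by
          intro t ht
          have := Finset.mem_filter.1 ht
          rcases Nat.lt_or_ge t (j + 1) with h | h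
          · exact Finset.mem_insert_of_mem (Finset.mem_filter.2 ⟨this.1, by omega⟩)
          · have : t = j + 1 := by omega
            exact this ▸ Finset.mem_insert_self _ _
        calc (T.filter fun t => t ≤ j + 1).card
            ≤ (insert (j + 1) (T.filter fun t => t ≤ j)).card := Finset.card_le_card hsub
          _ ≤ (T.filter fun t => t ≤ j).card + 1 := Finset.card_insert_le _ _
          _ ≤ g (j + 1) + 1 := by omega
          _ ≤ g (j + 1 + 1) := by omega
      · have heq : (T.filter fun t => t ≤ j + 1) = (T.filter fun t => t ≤ j) := by
          ext t
          simp only [Finset.mem_filter]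
          constructor
          · rintro ⟨ht, hle⟩
            refine ⟨ht, ?_⟩
            rcases Nat.lt_or_ge t (j + 1) with h' | h'
            · omega
            · exfalso
              apply hjT
              have htj : t = j + 1 := by omega
              rwa [htj] at ht
          · rintro ⟨ht, hle⟩
            exact ⟨ht, by omega⟩
        have hmono' := (hstep (j + 1) (by omega) hj).1
        rw [heq]
        omega
  -- conclude
  have hTne : T.Nonempty := Finset.card_pos.1 (by omega)
  set i₀ := T.max' hTne with hi₀
  have hi₀T : i₀ ∈ T := T.max'_mem hTne
  have hi₀mem := Finset.mem_Icc.1 (Finset.mem_filter.1 hi₀T).1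
  have hfull : T.filter (fun t => t ≤ i₀) = T := by
    apply Finset.filter_true_of_mem
    intro t ht
    exact T.le_max' t ht
  have h1 := claim i₀ hi₀mem.2
  rw [hfull] at h1
  have h2 := (hstep i₀ hi₀mem.1 hi₀mem.2).2 hi₀T
  omega

theorem pow_self_le_exp_mul_factorial (N : ℕ) :
    (N : ℝ) ^ N ≤ (Real.exp 1) ^ N * N.factorial := by
  induction N with
  | zero => simp
  | succ N ih =>
    have hE : (0:ℝ) < Real.exp 1 := Real.exp_pos 1
    have hL2 : ((N : ℝ) + 1) ^ N ≤ Real.exp 1 * (N : ℝ) ^ N := by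
      rcases Nat.eq_zero_or_pos N with h | h
      · subst h; simp
      · have hN : (0:ℝ) < N := by exact_mod_cast h
        have h1 : (1 : ℝ) + 1 / N ≤ Real.exp (1 / N) := by
          have := Real.add_one_le_exp (1 / (N:ℝ))
          linarith
        have h2 : ((1 : ℝ) + 1 / N) ^ N ≤ (Real.exp (1 / N)) ^ N := by
          apply pow_le_pow_left₀ (by positivity) h1
        have h3 : (Real.exp (1 / (N:ℝ))) ^ N = Real.exp 1 := by
          rw [← Real.exp_nat_mul]
          congr 1
          field_simp
        have h4 : ((N : ℝ) + 1) ^ N = ((N:ℝ) ^ N) * ((1 : ℝ) + 1 / N) ^ N := by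
          rw [← mul_pow]
          congr 1
          field_simp
        rw [h4]
        calc ((N:ℝ) ^ N) * ((1 : ℝ) + 1 / N) ^ N
            ≤ ((N:ℝ) ^ N) * Real.exp 1 := by
              apply mul_le_mul_of_nonneg_left (h2.trans_eq h3) (by positivity)
          _ = Real.exp 1 * (N : ℝ) ^ N := by ring
    have : ((N : ℝ) + 1) ^ (N + 1) = ((N : ℝ) + 1) ^ N * ((N : ℝ) + 1) := by ring
    push_cast
    rw [this]
    calc ((N : ℝ) + 1) ^ N * ((N : ℝ) + 1)
        ≤ (Real.exp 1 * (N : ℝ) ^ N) * ((N : ℝ) + 1) := by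
          apply mul_le_mul_of_nonneg_right hL2 (by positivity)
      _ ≤ (Real.exp 1 * ((Real.exp 1) ^ N * N.factorial)) * ((N : ℝ) + 1) := by
          have : (0:ℝ) ≤ (N:ℝ) + 1 := by positivity
          apply mul_le_mul_of_nonneg_right _ this
          apply mul_le_mul_of_nonneg_left ih (le_of_lt hE)
      _ = (Real.exp 1) ^ (N + 1) * (N.factorial * ((N:ℝ) + 1)) := by ring
      _ = (Real.exp 1) ^ (N + 1) * ((N + 1).factorial) := by
          rw [Nat.factorial_succ]
          push_cast
          ring

theorem succ_pow_succ_le (N : ℕ) :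
    ((N : ℝ) + 1) ^ (N + 1) ≤ Real.exp 1 * (N : ℝ) ^ N * 2 ^ (N + 1) := by
  have hL2 : ((N : ℝ) + 1) ^ N ≤ Real.exp 1 * (N : ℝ) ^ N := by
    rcases Nat.eq_zero_or_pos N with h | h
    · subst h; simp
    · have hN : (0:ℝ) < N := by exact_mod_cast h
      have h1 : (1 : ℝ) + 1 / N ≤ Real.exp (1 / N) := by
        have := Real.add_one_le_exp (1 / (N:ℝ))
        linarith
      have h2 : ((1 : ℝ) + 1 / N) ^ N ≤ (Real.exp (1 / N)) ^ N :=
        pow_le_pow_left₀ (by positivity) h1 N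
      have h3 : (Real.exp (1 / (N:ℝ))) ^ N = Real.exp 1 := by
        rw [← Real.exp_nat_mul]; congr 1; field_simp
      have h4 : ((N : ℝ) + 1) ^ N = ((N:ℝ) ^ N) * ((1 : ℝ) + 1 / N) ^ N := by
        rw [← mul_pow]; congr 1; field_simp
      rw [h4]
      calc ((N:ℝ) ^ N) * ((1 : ℝ) + 1 / N) ^ N
          ≤ ((N:ℝ) ^ N) * Real.exp 1 :=
            mul_le_mul_of_nonneg_left (h2.trans_eq h3) (by positivity)
        _ = Real.exp 1 * (N : ℝ) ^ N := by ring
  have hN2 : ((N : ℝ) + 1) ≤ 2 ^ (N + 1) := by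
    have := Nat.lt_two_pow_self (n := N + 1)
    have h' : ((N:ℝ) + 1) < (2:ℝ) ^ (N+1) := by exact_mod_cast this
    linarith
  calc ((N : ℝ) + 1) ^ (N + 1) = ((N : ℝ) + 1) ^ N * ((N:ℝ) + 1) := by ring
    _ ≤ (Real.exp 1 * (N : ℝ) ^ N) * (2 ^ (N + 1)) := by
        apply mul_le_mul hL2 hN2 (by positivity) (by positivity)
    _ = Real.exp 1 * (N : ℝ) ^ N * 2 ^ (N + 1) := by ring

theorem analytic_bound (m : ℕ) (hm : 1 ≤ m) :
    ∃ c : ℝ, 0 < c ∧ ∀ n : ℕ, 0 < n →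
      c ^ n * (n : ℝ) ^ ((n : ℝ) * (1 - 1 / (m : ℝ))) ≤ ((n / m).factorial : ℝ) ^ (m - 1) := by
  set E : ℝ := Real.exp 1 with hE
  have hE1 : (1:ℝ) ≤ E := Real.one_le_exp zero_le_one
  have hE0 : (0:ℝ) < E := Real.exp_pos 1
  have hmR : (1:ℝ) ≤ (m:ℝ) := by exact_mod_cast hm
  set D : ℝ := 2 * E * m with hD
  have hD1 : (1:ℝ) ≤ D := by nlinarith
  have hD0 : (0:ℝ) < D := by linarith
  have hDinv1 : D⁻¹ ≤ 1 := inv_le_one_of_one_le₀ hD1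
  have hDinv0 : (0:ℝ) < D⁻¹ := by positivity
  refine ⟨D⁻¹ ^ (2 * m), by positivity, ?_⟩
  intro n hn
  set N := n / m with hN
  have hn1 : (1:ℝ) ≤ (n:ℝ) := by exact_mod_cast hn
  have h1m : (0:ℝ) ≤ 1 / m := by positivity
  have hβ0 : (0:ℝ) ≤ 1 - 1 / m := by
    have : 1 / (m:ℝ) ≤ 1 := by rw [div_le_one (by linarith)]; exact hmR
    linarith
  rcases Nat.eq_zero_or_pos N with hN0 | hN1
  · -- n < m
    have hnm : n < m := by
      by_contra h
      have : 1 ≤ n / m := Nat.one_le_div_iff (by omega) |>.2 (by omega)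
      omega
    have hnmR : (n:ℝ) ≤ (m:ℝ) := by exact_mod_cast hnm.le
    rw [hN0]
    simp only [Nat.factorial_zero, Nat.cast_one, one_pow]
    have s1 : (n : ℝ) ^ ((n : ℝ) * (1 - 1 / m)) ≤ (n:ℝ) ^ ((n:ℝ)) := by
      apply Real.rpow_le_rpow_of_exponent_le hn1
      nlinarith
    have s2 : (n:ℝ) ^ ((n:ℝ)) = (n:ℝ) ^ (n:ℕ) := Real.rpow_natCast _ n
    have s3 : (n:ℝ) ^ (n:ℕ) ≤ (m:ℝ) ^ (m:ℕ) := by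
      calc (n:ℝ) ^ (n:ℕ) ≤ (m:ℝ) ^ (n:ℕ) := pow_le_pow_left₀ (by positivity) hnmR n
        _ ≤ (m:ℝ) ^ (m:ℕ) := pow_le_pow_right₀ hmR hnm.le
    have s3' : (n:ℝ) ^ ((n:ℝ)) ≤ (m:ℝ) ^ (m:ℕ) := by rw [s2]; exact s3
    have s4 : (D⁻¹ ^ (2*m)) ^ n ≤ D⁻¹ ^ (2*m) :=
      pow_le_of_le_one (by positivity) (pow_le_one₀ (le_of_lt hDinv0) hDinv1) (by omega)
    have s5 : D⁻¹ ^ (2*m) ≤ ((m:ℝ)⁻¹) ^ m := by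
      calc D⁻¹ ^ (2*m) ≤ D⁻¹ ^ m :=
            pow_le_pow_of_le_one (le_of_lt hDinv0) hDinv1 (by omega)
        _ ≤ ((m:ℝ)⁻¹) ^ m := by
            apply pow_le_pow_left₀ (le_of_lt hDinv0)
            apply inv_anti₀ (by linarith)
            nlinarith
    calc (D⁻¹ ^ (2*m)) ^ n * (n : ℝ) ^ ((n : ℝ) * (1 - 1 / m))
        ≤ ((m:ℝ)⁻¹) ^ m * (m:ℝ) ^ (m:ℕ) := by
          apply mul_le_mul (s4.trans s5) (s1.trans s3') (by positivity) (by positivity)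
      _ = 1 := by
          rw [← mul_pow]
          rw [inv_mul_cancel₀ (by linarith)]
          simp
  · -- main case N ≥ 1
    have hmN : m * N ≤ n := by
      rw [hN, Nat.mul_comm]
      exact Nat.div_mul_le_self n m
    have hnlt : n < m * (N + 1) := by
      rw [Nat.mul_comm]
      exact (Nat.div_lt_iff_lt_mul (by omega)).1 (Nat.lt_succ_self N)
    set X : ℝ := (m:ℝ) * ((N:ℝ) + 1) with hX
    have hNR0 : (0:ℝ) ≤ (N:ℝ) := Nat.cast_nonneg N
    have hX1 : (1:ℝ) ≤ X := by nlinarith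
    have hnX : (n:ℝ) ≤ X := by
      rw [hX]
      have : (n:ℝ) < (m:ℝ) * ((N:ℝ) + 1) := by exact_mod_cast hnlt
      linarith
    have hmt : (m:ℝ) * (1/m) = 1 := by field_simp
    have hexp : (n:ℝ) * (1 - 1/m) ≤ (((N+1) * (m-1) : ℕ) : ℝ) := by
      push_cast [Nat.cast_sub hm]
      have h2 := mul_le_mul_of_nonneg_right hnX hβ0
      rw [hX] at h2
      nlinarith
    have A1 : (n:ℝ) ^ ((n:ℝ)*(1-1/(m:ℝ))) ≤ X ^ (((N+1)*(m-1)) : ℕ) := by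
      calc (n:ℝ) ^ ((n:ℝ)*(1-1/(m:ℝ))) ≤ X ^ ((n:ℝ)*(1-1/(m:ℝ))) :=
            Real.rpow_le_rpow (by positivity) hnX (by positivity)
        _ ≤ X ^ ((((N+1)*(m-1) : ℕ)) : ℝ) := Real.rpow_le_rpow_of_exponent_le hX1 hexp
        _ = X ^ (((N+1)*(m-1)) : ℕ) := Real.rpow_natCast _ _
    have core : D⁻¹ ^ (N+1) * X ^ (N+1) ≤ (N.factorial : ℝ) := by
      rw [inv_pow, inv_mul_le_iff₀ (by positivity)]
      have e1 : X ^ (N+1) = (m:ℝ)^(N+1) * ((N:ℝ)+1)^(N+1) := by rw [hX, mul_pow]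
      have e2 : D ^ (N+1) = 2^(N+1) * E^(N+1) * (m:ℝ)^(N+1) := by rw [hD]; ring
      have l1 := pow_self_le_exp_mul_factorial N
      have l2 := succ_pow_succ_le N
      calc X ^ (N+1) = (m:ℝ)^(N+1) * ((N:ℝ)+1)^(N+1) := e1
        _ ≤ (m:ℝ)^(N+1) * (Real.exp 1 * (N:ℝ)^N * 2^(N+1)) :=
            mul_le_mul_of_nonneg_left l2 (by positivity)
        _ ≤ (m:ℝ)^(N+1) * (Real.exp 1 * ((Real.exp 1)^N * N.factorial) * 2^(N+1)) := by
            apply mul_le_mul_of_nonneg_left _ (by positivity)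
            apply mul_le_mul_of_nonneg_right _ (by positivity)
            exact mul_le_mul_of_nonneg_left l1 (le_of_lt hE0)
        _ = (N.factorial : ℝ) * (2^(N+1) * E^(N+1) * (m:ℝ)^(N+1)) := by rw [hE]; ring
        _ = D^(N+1) * (N.factorial : ℝ) := by rw [e2]; ring
    have B1 : (D⁻¹ ^ (2*m)) ^ n ≤ (D⁻¹ ^ (N+1)) ^ (m-1) := by
      rw [← pow_mul, ← pow_mul]
      apply pow_le_pow_of_le_one (le_of_lt hDinv0) hDinv1
      calc (N+1) * (m-1) ≤ (2*N) * m := Nat.mul_le_mul (by omega) (by omega)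
        _ = 2 * (m * N) := by ring
        _ ≤ 2 * n := by omega
        _ ≤ 2 * m * n := by
            have h5 : n ≤ m * n := Nat.le_mul_of_pos_left n (by omega)
            calc 2 * n ≤ 2 * (m*n) := by omega
              _ = 2 * m * n := by ring
    calc (D⁻¹ ^ (2*m)) ^ n * (n:ℝ) ^ ((n:ℝ)*(1-1/(m:ℝ)))
        ≤ (D⁻¹ ^ (N+1)) ^ (m-1) * (X ^ (N+1)) ^ (m-1) := by
          apply mul_le_mul B1 ?_ (by positivity) (by positivity)
          calc (n:ℝ) ^ ((n:ℝ)*(1-1/(m:ℝ))) ≤ X ^ (((N+1)*(m-1)) : ℕ) := A1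
            _ = (X ^ (N+1)) ^ (m-1) := pow_mul X (N+1) (m-1)
      _ = (D⁻¹ ^ (N+1) * X ^ (N+1)) ^ (m-1) := (mul_pow _ _ _).symm
      _ ≤ ((N.factorial : ℝ)) ^ (m-1) := pow_le_pow_left₀ (by positivity) core _

theorem count_lower {n m N k k' : ℕ} (hm : 0 < m) (hmn : m * N ≤ n)
    (τ : Finpartition (Finset.Icc 1 k)) (Q : Finpartition (Finset.Icc 1 k'))
    (hcont : SetPartContains τ Q)
    (hT : m ≤ ((Finset.Icc 1 (k' - 1)).filter fun i => SameBlock Q i (i + 1)).card) :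
    N.factorial ^ (m - 1) ≤ A n τ := by
  have havoid : ∀ F : Fin (m - 1) → Equiv.Perm (Fin N),
      ¬ SetPartContains (fiberPart n (lab m N (pfun m N F))) τ := by
    intro F hcτ
    exact fiberPart_avoids (pfun m N F) Q hm hmn hT (setPartContains_trans hcτ hcont)
  have hinj : Function.Injective (fun F : Fin (m - 1) → Equiv.Perm (Fin N) =>
      (⟨fiberPart n (lab m N (pfun m N F)), havoid F⟩ :
        {σ : Finpartition (Finset.Icc 1 n) // ¬ SetPartContains σ τ})) := by
    intro F G h
    exact lab_inj hm hmn (congrArg Subtype.val h)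
  have hcard := Nat.card_le_card_of_injective _ hinj
  rw [Nat.card_eq_fintype_card] at hcard
  rw [A]
  calc N.factorial ^ (m - 1)
      = Fintype.card (Fin (m - 1) → Equiv.Perm (Fin N)) := by
        rw [Fintype.card_fun, Fintype.card_perm, Fintype.card_fin, Fintype.card_fin]
    _ ≤ _ := hcard


/-- If a set partition `τ` of `[k]` contains a set partition `P` of `[k']`
with fewer than `r'` indices `1 ≤ i ≤ k' - 1` having `i` and `i+1` in different blocks
(where `1 ≤ r' < k'`), then there is `c > 0` with `A_n(τ) ≥ c^n · n^(n(1 - 1/(k'-r')))`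
for all `n ≥ 1`. -/
theorem general_lower_bound (k k' r' : ℕ) (hr' : 0 < r') (hrk' : r' < k')
    (τ : Finpartition (Finset.Icc 1 k)) (Q : Finpartition (Finset.Icc 1 k'))
    (hcont : SetPartContains τ Q)
    (hQ : ((Finset.Icc 1 (k' - 1)).filter fun i => ¬ SameBlock Q i (i + 1)).card < r') :
    ∃ c : ℝ, 0 < c ∧ ∀ n : ℕ, 0 < n →
      c ^ n * (n : ℝ) ^ ((n : ℝ) * (1 - 1 / ((k' : ℝ) - r'))) ≤ (A n τ : ℝ) := by
  set m := k' - r' with hmdef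
  have hm : 0 < m := by omega
  have hcast : (k' : ℝ) - r' = (m : ℝ) := by
    rw [hmdef, Nat.cast_sub hrk'.le]
  have hT : m ≤ ((Finset.Icc 1 (k' - 1)).filter fun i => SameBlock Q i (i + 1)).card := by
    have hsplit := Finset.card_filter_add_card_filter_not
      (s := Finset.Icc 1 (k' - 1)) (p := fun i => SameBlock Q i (i + 1))
    rw [Nat.card_Icc] at hsplit
    omega
  obtain ⟨c, hc, hbound⟩ := analytic_bound m hm
  refine ⟨c, hc, fun n hn => ?_⟩
  have hmn : m * (n / m) ≤ n := by
    rw [Nat.mul_comm]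
    exact Nat.div_mul_le_self n m
  have h1 := hbound n hn
  have h2 := count_lower (N := n / m) hm hmn τ Q hcont hT
  rw [hcast]
  calc c ^ n * (n : ℝ) ^ ((n : ℝ) * (1 - 1 / (m : ℝ)))
      ≤ ((n / m).factorial : ℝ) ^ (m - 1) := h1
    _ ≤ (A n τ : ℝ) := by exact_mod_cast h2
end

section
/- Let τ be a set partition of [k] that avoids both the set partition 123 of [3] (a single block of size 3) and the set partition 12/34 of [4] (blocks {1,2} and {3,4}). Then every block of τ has size at most 2, and there exists an integer t with 0 ≤ t ≤ k such that every block {a, b} of τ of size 2 with a < b satisfies a ≤ t < b. -/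
lemma sb_symm {n : ℕ} {P : Finpartition (Finset.Icc 1 n)} {i j : ℕ}
    (h : SameBlock P i j) : SameBlock P j i := by
  obtain ⟨B, hB, h1, h2⟩ := h; exact ⟨B, hB, h2, h1⟩

def pat3 : Finpartition (Finset.Icc 1 3) := Finpartition.indiscrete (by decide)

def pat4 : Finpartition (Finset.Icc 1 4) where
  parts := {({1,2} : Finset ℕ), {3,4}}
  supIndep := by decide
  sup_parts := by decide
  bot_notMem := by decide

/-- If a set partition `τ` of `[k]` avoids both `123` (a single block of
size 3) and `12/34` (blocks `{1,2}` and `{3,4}`), then every block of `τ` has size at most 2,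
and there is `0 ≤ t ≤ k` such that every size-2 block `{a, b}` with `a < b`
satisfies `a ≤ t < b`. -/
theorem avoider_structure (k : ℕ) (τ : Finpartition (Finset.Icc 1 k))
    (h3 : ∀ p : Finpartition (Finset.Icc 1 3), p.parts = {Finset.Icc 1 3} →
      ¬ SetPartContains τ p)
    (h4 : ∀ p : Finpartition (Finset.Icc 1 4),
      p.parts = ({({1, 2} : Finset ℕ), ({3, 4} : Finset ℕ)} : Finset (Finset ℕ)) →
      ¬ SetPartContains τ p) :
    (∀ B ∈ τ.parts, B.card ≤ 2) ∧
      ∃ t : ℕ, t ≤ k ∧ ∀ a b : ℕ, a < b → ({a, b} : Finset ℕ) ∈ τ.parts → a ≤ t ∧ t < b := by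
  constructor
  · -- every block has size at most 2
    intro B hB
    by_contra hcard
    push_neg at hcard
    have hne : B.Nonempty := Finset.card_pos.mp (by omega)
    have hac : B.min' hne < B.max' hne := Finset.min'_lt_max'_of_card (s := B) (by omega)
    set a := B.min' hne with ha
    set c := B.max' hne with hc
    have hcB : c ∈ B.erase a := Finset.mem_erase.mpr ⟨hac.ne', B.max'_mem hne⟩
    have hcardE : ((B.erase a).erase c).card = B.card - 2 := by
      rw [Finset.card_erase_of_mem hcB, Finset.card_erase_of_mem (B.min'_mem hne)]
      omega
    obtain ⟨b, hb⟩ := Finset.card_pos.mp (show 0 < ((B.erase a).erase c).card by omega)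
    rw [Finset.mem_erase, Finset.mem_erase] at hb
    obtain ⟨hbc', hba', hbB⟩ := hb
    have hab : a < b := lt_of_le_of_ne (B.min'_le b hbB) (Ne.symm hba')
    have hbc : b < c := lt_of_le_of_ne (B.le_max' b hbB) hbc'
    have haB : a ∈ B := B.min'_mem hne
    have hcBB : c ∈ B := B.max'_mem hne
    apply h3 pat3 rfl
    refine ⟨fun x => if x = 1 then a else if x = 2 then b else c, ?_, ?_, ?_⟩
    · intro i hi
      rw [Finset.mem_Icc] at hi
      obtain ⟨hi1, hi2⟩ := hi
      interval_cases i
      · exact τ.le hB haB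
      · exact τ.le hB hbB
      · exact τ.le hB hcBB
    · intro i hi j hj hij
      rw [Finset.mem_Icc] at hi hj
      obtain ⟨hi1, hi2⟩ := hi
      obtain ⟨hj1, hj2⟩ := hj
      interval_cases i <;> interval_cases j <;>
        first
          | exact hab
          | exact hbc
          | exact hab.trans hbc
          | omega
    · intro i hi j hj
      rw [Finset.mem_Icc] at hi hj
      obtain ⟨hi1, hi2⟩ := hi
      obtain ⟨hj1, hj2⟩ := hj
      refine iff_of_true ⟨Finset.Icc 1 3, Finset.mem_singleton_self _,
        Finset.mem_Icc.mpr ⟨hi1, hi2⟩, Finset.mem_Icc.mpr ⟨hj1, hj2⟩⟩ ?_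
      refine ⟨B, hB, ?_, ?_⟩ <;>
        (interval_cases i <;> interval_cases j <;>
          first
            | exact haB
            | exact hbB
            | exact hcBB)
  · -- existence of t
    have cross : ∀ a b c d : ℕ, a < b → b < c → c < d →
        ({a, b} : Finset ℕ) ∈ τ.parts → ({c, d} : Finset ℕ) ∈ τ.parts → False := by
      intro a b c d hab hbc hcd hB1 hB2
      have haI : a ∈ Finset.Icc 1 k := τ.le hB1 (by simp)
      have hbI : b ∈ Finset.Icc 1 k := τ.le hB1 (by simp)
      have hcI : c ∈ Finset.Icc 1 k := τ.le hB2 (by simp)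
      have hdI : d ∈ Finset.Icc 1 k := τ.le hB2 (by simp)
      have sab : SameBlock τ a b := ⟨{a, b}, hB1, by simp, by simp⟩
      have scd : SameBlock τ c d := ⟨{c, d}, hB2, by simp, by simp⟩
      have saa : SameBlock τ a a := ⟨{a, b}, hB1, by simp, by simp⟩
      have sbb : SameBlock τ b b := ⟨{a, b}, hB1, by simp, by simp⟩
      have scc : SameBlock τ c c := ⟨{c, d}, hB2, by simp, by simp⟩
      have sdd : SameBlock τ d d := ⟨{c, d}, hB2, by simp, by simp⟩
      have key : ∀ x y : ℕ, x ∈ ({a, b} : Finset ℕ) → y ∈ ({c, d} : Finset ℕ) →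
          ¬ SameBlock τ x y := by
        rintro x y hx hy ⟨E, hE, hxE, hyE⟩
        have e1 : E = {a, b} := τ.eq_of_mem_parts hE hB1 hxE hx
        have e2 : E = {c, d} := τ.eq_of_mem_parts hE hB2 hyE hy
        rw [e1] at e2
        have : a ∈ ({c, d} : Finset ℕ) := e2 ▸ (by simp : a ∈ ({a, b} : Finset ℕ))
        simp only [Finset.mem_insert, Finset.mem_singleton] at this
        omega
      have nac : ¬ SameBlock τ a c := key a c (by simp) (by simp)
      have nad : ¬ SameBlock τ a d := key a d (by simp) (by simp)
      have nbc : ¬ SameBlock τ b c := key b c (by simp) (by simp)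
      have nbd : ¬ SameBlock τ b d := key b d (by simp) (by simp)
      have nca : ¬ SameBlock τ c a := fun h => nac (sb_symm h)
      have nda : ¬ SameBlock τ d a := fun h => nad (sb_symm h)
      have ncb : ¬ SameBlock τ c b := fun h => nbc (sb_symm h)
      have ndb : ¬ SameBlock τ d b := fun h => nbd (sb_symm h)
      apply h4 pat4 rfl
      refine ⟨fun x => if x = 1 then a else if x = 2 then b else if x = 3 then c else d,
        ?_, ?_, ?_⟩
      · intro i hi
        rw [Finset.mem_Icc] at hi
        obtain ⟨hi1, hi2⟩ := hi
        interval_cases i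
        · exact haI
        · exact hbI
        · exact hcI
        · exact hdI
      · intro i hi j hj hij
        rw [Finset.mem_Icc] at hi hj
        obtain ⟨hi1, hi2⟩ := hi
        obtain ⟨hj1, hj2⟩ := hj
        interval_cases i <;> interval_cases j <;>
          first
            | exact hab
            | exact hbc
            | exact hcd
            | exact hab.trans hbc
            | exact hbc.trans hcd
            | exact (hab.trans hbc).trans hcd
            | omega
      · intro i hi j hj
        rw [Finset.mem_Icc] at hi hj
        obtain ⟨hi1, hi2⟩ := hi
        obtain ⟨hj1, hj2⟩ := hj
        interval_cases i <;> interval_cases j <;>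
          first
          | exact iff_of_true (by decide) saa
          | exact iff_of_true (by decide) sbb
          | exact iff_of_true (by decide) scc
          | exact iff_of_true (by decide) sdd
          | exact iff_of_true (by decide) sab
          | exact iff_of_true (by decide) (sb_symm sab)
          | exact iff_of_true (by decide) scd
          | exact iff_of_true (by decide) (sb_symm scd)
          | exact iff_of_false (by decide) nac
          | exact iff_of_false (by decide) nad
          | exact iff_of_false (by decide) nbc
          | exact iff_of_false (by decide) nbd
          | exact iff_of_false (by decide) nca
          | exact iff_of_false (by decide) nda
          | exact iff_of_false (by decide) ncb
          | exact iff_of_false (by decide) ndb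
    have pairmin : ∀ c d : ℕ, c < d → WithTop.untopD 0 (({c, d} : Finset ℕ).min) = c := by
      intro c d h
      have h1 : ({c, d} : Finset ℕ).min = ((c : ℕ) : WithTop ℕ) := by
        apply le_antisymm (Finset.min_le (by simp))
        rw [Finset.le_min_iff]
        intro y hy
        simp only [Finset.mem_insert, Finset.mem_singleton] at hy
        have hcy : c ≤ y := by rcases hy with rfl | rfl <;> omega
        exact WithTop.coe_le_coe.mpr hcy
      rw [h1]
      rfl
    have pair : ∀ C ∈ τ.parts, C.card = 2 → ∃ c d : ℕ, c < d ∧ C = {c, d} := by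
      intro C _ hC
      obtain ⟨x, y, hxy, rfl⟩ := Finset.card_eq_two.mp hC
      rcases hxy.lt_or_gt with h | h
      · exact ⟨x, y, h, rfl⟩
      · exact ⟨y, x, h, Finset.pair_comm x y⟩
    refine ⟨(τ.parts.filter fun B => B.card = 2).sup (fun B => WithTop.untopD 0 (B.min)), ?_, ?_⟩
    · apply Finset.sup_le
      intro C hC
      rw [Finset.mem_filter] at hC
      obtain ⟨c, d, hcd, rfl⟩ := pair C hC.1 hC.2
      rw [pairmin c d hcd]
      have := τ.le hC.1 (show c ∈ ({c, d} : Finset ℕ) by simp)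
      rw [Finset.mem_Icc] at this
      omega
    · intro a b hab hmem
      have habI := τ.le hmem (show b ∈ ({a, b} : Finset ℕ) by simp)
      rw [Finset.mem_Icc] at habI
      have hfil : ({a, b} : Finset ℕ) ∈ τ.parts.filter fun B => B.card = 2 :=
        Finset.mem_filter.mpr ⟨hmem, Finset.card_pair hab.ne⟩
      constructor
      · rw [← pairmin a b hab]
        exact Finset.le_sup (f := fun B => WithTop.untopD 0 (B.min)) hfil
      · rw [Finset.sup_lt_iff (show (⊥ : ℕ) < b by change 0 < b; omega)]
        intro C hC
        rw [Finset.mem_filter] at hC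
        obtain ⟨c, d, hcd, rfl⟩ := pair C hC.1 hC.2
        rw [pairmin c d hcd]
        by_contra hbc
        push_neg at hbc
        by_cases heq : ({c, d} : Finset ℕ) = ({a, b} : Finset ℕ)
        · have : c ∈ ({a, b} : Finset ℕ) := heq ▸ (by simp : c ∈ ({c, d} : Finset ℕ))
          have hd : d ∈ ({a, b} : Finset ℕ) := heq ▸ (by simp : d ∈ ({c, d} : Finset ℕ))
          simp only [Finset.mem_insert, Finset.mem_singleton] at this hd
          omega
        · have hbcs : b < c := by
            rcases eq_or_lt_of_le hbc with h | h
            · exact absurd (τ.eq_of_mem_parts hC.1 hmem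
                (show b ∈ ({c, d} : Finset ℕ) by rw [h]; simp) (by simp)) heq
            · exact h
          exact cross a b c d hab hbcs hcd hmem hC.1
end

section
/- Let τ be a set partition of [k] that avoids both the set partition 123 of [3] (a single block of size 3) and the set partition 12/34 of [4] (blocks {1,2} and {3,4}). Then there exist a positive integer m and a permutation σ of [m] such that τ is contained in the permutation partition of [2m] associated to σ, namely the set partition of [2m] whose blocks are {i, m + σ(i)} for 1 ≤ i ≤ m. -/
namespace ContainedPermAux

variable {k : ℕ}

lemma sb_refl (τ : Finpartition (Finset.Icc 1 k)) {i : ℕ} (hi : i ∈ Finset.Icc 1 k) :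
    SameBlock τ i i := by
  obtain ⟨B, hB, hiB⟩ := τ.exists_mem hi
  exact ⟨B, hB, hiB, hiB⟩

lemma sb_symm (τ : Finpartition (Finset.Icc 1 k)) {i j : ℕ} (h : SameBlock τ i j) :
    SameBlock τ j i := by
  obtain ⟨B, hB, h1, h2⟩ := h; exact ⟨B, hB, h2, h1⟩

lemma sb_trans (τ : Finpartition (Finset.Icc 1 k)) {i j l : ℕ}
    (h1 : SameBlock τ i j) (h2 : SameBlock τ j l) : SameBlock τ i l := by
  obtain ⟨B, hB, hi, hj⟩ := h1
  obtain ⟨B', hB', hj', hl⟩ := h2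
  have hBB : B = B' := τ.eq_of_mem_parts hB hB' hj hj'
  exact ⟨B, hB, hi, hBB ▸ hl⟩

/-- The indiscrete partition of `[3]`. -/
def p3 : Finpartition (Finset.Icc 1 3) := Finpartition.indiscrete (by decide)

/-- The partition `12/34` of `[4]`. -/
def p4 : Finpartition (Finset.Icc 1 4) :=
  ⟨{({1,2} : Finset ℕ), ({3,4} : Finset ℕ)}, by decide, by decide, by decide⟩

/-- No three elements `x < y < z` lie in a common block of `τ`. -/
lemma no3 (τ : Finpartition (Finset.Icc 1 k))
    (h3 : ∀ p : Finpartition (Finset.Icc 1 3), p.parts = {Finset.Icc 1 3} →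
      ¬ SetPartContains τ p) :
    ∀ x ∈ Finset.Icc 1 k, ∀ y ∈ Finset.Icc 1 k, ∀ z ∈ Finset.Icc 1 k,
      x < y → y < z → SameBlock τ x y → SameBlock τ y z → False := by
  intro x hx y hy z hz hxy hyz hsxy hsyz
  obtain ⟨B, hB, hxB, hyB⟩ := hsxy
  obtain ⟨B', hB', hyB', hzB⟩ := hsyz
  have hBB : B = B' := τ.eq_of_mem_parts hB hB' hyB hyB'
  subst hBB
  refine h3 p3 rfl ?_
  refine ⟨fun n => if n = 1 then x else if n = 2 then y else z, ?_, ?_, ?_⟩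
  · intro n hn
    simp only [Finset.mem_Icc] at hn
    obtain ⟨hn1, hn2⟩ := hn
    interval_cases n <;> simp [hx, hy, hz]
  · intro n hn n' hn' hlt
    simp only [Finset.mem_Icc] at hn hn'
    obtain ⟨hn1, hn2⟩ := hn
    obtain ⟨hn1', hn2'⟩ := hn'
    interval_cases n <;> interval_cases n' <;> simp <;> omega
  · intro n hn n' hn'
    constructor
    · intro _
      refine ⟨B, hB, ?_, ?_⟩
      · simp only [Finset.mem_Icc] at hn
        obtain ⟨hn1, hn2⟩ := hn
        interval_cases n <;> simp [hxB, hyB, hzB]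
      · simp only [Finset.mem_Icc] at hn'
        obtain ⟨hn1', hn2'⟩ := hn'
        interval_cases n' <;> simp [hxB, hyB, hzB]
    · intro _
      exact ⟨Finset.Icc 1 3, by simp [p3, Finpartition.indiscrete], hn, hn'⟩

/-- No three pairwise-distinct elements lie in a common block. -/
lemma no3' (τ : Finpartition (Finset.Icc 1 k))
    (no3 : ∀ x ∈ Finset.Icc 1 k, ∀ y ∈ Finset.Icc 1 k, ∀ z ∈ Finset.Icc 1 k,
      x < y → y < z → SameBlock τ x y → SameBlock τ y z → False) :
    ∀ x ∈ Finset.Icc 1 k, ∀ y ∈ Finset.Icc 1 k, ∀ z ∈ Finset.Icc 1 k,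
      x ≠ y → x ≠ z → y ≠ z → SameBlock τ x y → SameBlock τ x z → False := by
  intro x hx y hy z hz hxy hxz hyz h1 h2
  have hyx := sb_symm τ h1
  have hzx := sb_symm τ h2
  have hyz' : SameBlock τ y z := sb_trans τ hyx h2
  have hzy' := sb_symm τ hyz'
  rcases lt_trichotomy x y with ho1 | ho1 | ho1
  · rcases lt_trichotomy y z with ho2 | ho2 | ho2
    · exact no3 x hx y hy z hz ho1 ho2 h1 hyz'
    · exact hyz ho2
    · rcases lt_trichotomy x z with ho3 | ho3 | ho3
      · exact no3 x hx z hz y hy ho3 ho2 h2 hzy'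
      · exact hxz ho3
      · exact no3 z hz x hx y hy ho3 ho1 hzx h1
  · exact hxy ho1
  · rcases lt_trichotomy x z with ho3 | ho3 | ho3
    · exact no3 y hy x hx z hz ho1 ho3 hyx h2
    · exact hxz ho3
    · rcases lt_trichotomy y z with ho2 | ho2 | ho2
      · exact no3 y hy z hz x hx ho2 ho3 hyz' hzx
      · exact hyz ho2
      · exact no3 z hz y hy x hx ho2 ho1 hzy' hyx

/-- No separated pairs `a < b < c < d` with `a ~ b` and `c ~ d`. -/
lemma noSep (τ : Finpartition (Finset.Icc 1 k))
    (h4 : ∀ p : Finpartition (Finset.Icc 1 4),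
      p.parts = ({({1, 2} : Finset ℕ), ({3, 4} : Finset ℕ)} : Finset (Finset ℕ)) →
      ¬ SetPartContains τ p)
    (no3 : ∀ x ∈ Finset.Icc 1 k, ∀ y ∈ Finset.Icc 1 k, ∀ z ∈ Finset.Icc 1 k,
      x < y → y < z → SameBlock τ x y → SameBlock τ y z → False) :
    ∀ a ∈ Finset.Icc 1 k, ∀ b ∈ Finset.Icc 1 k, ∀ c ∈ Finset.Icc 1 k, ∀ d ∈ Finset.Icc 1 k,
      a < b → b < c → c < d → SameBlock τ a b → SameBlock τ c d → False := by
  intro a ha b hb c hc d hd hab hbc hcd hsab hscd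
  have hsba := sb_symm τ hsab
  have hsdc := sb_symm τ hscd
  have hac : ¬ SameBlock τ a c := fun h =>
    no3 a ha b hb c hc hab hbc hsab (sb_trans τ hsba h)
  have had : ¬ SameBlock τ a d := fun h =>
    no3 a ha b hb d hd hab (lt_trans hbc hcd) hsab (sb_trans τ hsba h)
  have hbc' : ¬ SameBlock τ b c := fun h =>
    no3 a ha b hb c hc hab hbc hsab h
  have hbd : ¬ SameBlock τ b d := fun h =>
    no3 a ha b hb d hd hab (lt_trans hbc hcd) hsab h
  have hca : ¬ SameBlock τ c a := fun h => hac (sb_symm τ h)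
  have hda : ¬ SameBlock τ d a := fun h => had (sb_symm τ h)
  have hcb : ¬ SameBlock τ c b := fun h => hbc' (sb_symm τ h)
  have hdb : ¬ SameBlock τ d b := fun h => hbd (sb_symm τ h)
  refine h4 p4 rfl ?_
  refine ⟨fun n => if n = 1 then a else if n = 2 then b else if n = 3 then c else d, ?_, ?_, ?_⟩
  · intro n hn
    simp only [Finset.mem_Icc] at hn
    obtain ⟨hn1, hn2⟩ := hn
    interval_cases n <;> simp [ha, hb, hc, hd]
  · intro n hn n' hn' hlt
    simp only [Finset.mem_Icc] at hn hn'
    obtain ⟨hn1, hn2⟩ := hn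
    obtain ⟨hn1', hn2'⟩ := hn'
    interval_cases n <;> interval_cases n' <;> simp <;> omega
  · intro n hn n' hn'
    simp only [Finset.mem_Icc] at hn hn'
    obtain ⟨hn1, hn2⟩ := hn
    obtain ⟨hn1', hn2'⟩ := hn'
    have hraa := sb_refl τ ha
    have hrbb := sb_refl τ hb
    have hrcc := sb_refl τ hc
    have hrdd := sb_refl τ hd
    interval_cases n <;> interval_cases n' <;> norm_num
    · exact iff_of_true (by decide) hraa
    · exact iff_of_true (by decide) hsab
    · exact iff_of_false (by decide) hac
    · exact iff_of_false (by decide) had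
    · exact iff_of_true (by decide) hsba
    · exact iff_of_true (by decide) hrbb
    · exact iff_of_false (by decide) hbc'
    · exact iff_of_false (by decide) hbd
    · exact iff_of_false (by decide) hca
    · exact iff_of_false (by decide) hcb
    · exact iff_of_true (by decide) hrcc
    · exact iff_of_true (by decide) hscd
    · exact iff_of_false (by decide) hda
    · exact iff_of_false (by decide) hdb
    · exact iff_of_true (by decide) hsdc
    · exact iff_of_true (by decide) hrdd

end ContainedPermAux

namespace ContainedPermAux

variable {k : ℕ}

instance (τ : Finpartition (Finset.Icc 1 k)) (i : ℕ) :
    Decidable (∃ j ∈ Finset.Icc 1 k, j ≠ i ∧ SameBlock τ i j) :=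
  inferInstanceAs (Decidable (∃ j ∈ Finset.Icc 1 k, j ≠ i ∧ SameBlock τ i j))

instance (τ : Finpartition (Finset.Icc 1 k)) (i : ℕ) :
    Decidable (∃ j ∈ Finset.Icc 1 k, i < j ∧ SameBlock τ i j) :=
  inferInstanceAs (Decidable (∃ j ∈ Finset.Icc 1 k, i < j ∧ SameBlock τ i j))

/-- The set of elements of `[k]` lying in a block of size `≥ 2`. -/
def prs (τ : Finpartition (Finset.Icc 1 k)) : Finset ℕ :=
  (Finset.Icc 1 k).filter (fun i => ∃ j ∈ Finset.Icc 1 k, j ≠ i ∧ SameBlock τ i j)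

/-- The partner of `i` in its block. -/
def partner (τ : Finpartition (Finset.Icc 1 k)) (i : ℕ) : ℕ :=
  ((Finset.Icc 1 k).filter (fun j => j ≠ i ∧ SameBlock τ i j)).sup id

lemma mem_prs {τ : Finpartition (Finset.Icc 1 k)} {i : ℕ} :
    i ∈ prs τ ↔ i ∈ Finset.Icc 1 k ∧ ∃ j ∈ Finset.Icc 1 k, j ≠ i ∧ SameBlock τ i j :=
  Finset.mem_filter

lemma partner_le (τ : Finpartition (Finset.Icc 1 k)) (i : ℕ) : partner τ i ≤ k :=
  Finset.sup_le fun j hj => (Finset.mem_Icc.mp (Finset.mem_filter.mp hj).1).2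

lemma partner_pos (τ : Finpartition (Finset.Icc 1 k)) {i : ℕ} (h : i ∈ prs τ) :
    1 ≤ partner τ i := by
  obtain ⟨hi, j, hj, hne, hs⟩ := mem_prs.mp h
  calc (1:ℕ) ≤ j := (Finset.mem_Icc.mp hj).1
    _ ≤ partner τ i := Finset.le_sup (f := id) (Finset.mem_filter.mpr ⟨hj, hne, hs⟩)

lemma partner_eq (τ : Finpartition (Finset.Icc 1 k))
    (no3' : ∀ x ∈ Finset.Icc 1 k, ∀ y ∈ Finset.Icc 1 k, ∀ z ∈ Finset.Icc 1 k,
      x ≠ y → x ≠ z → y ≠ z → SameBlock τ x y → SameBlock τ x z → False)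
    {i j : ℕ} (hi : i ∈ Finset.Icc 1 k) (hj : j ∈ Finset.Icc 1 k)
    (hne : j ≠ i) (hs : SameBlock τ i j) : partner τ i = j := by
  have hset : (Finset.Icc 1 k).filter (fun j' => j' ≠ i ∧ SameBlock τ i j') = {j} := by
    ext j'
    simp only [Finset.mem_filter, Finset.mem_singleton]
    constructor
    · rintro ⟨hj', hne', hs'⟩
      by_contra hjj
      exact no3' i hi j hj j' hj' (Ne.symm hne) (Ne.symm hne') (fun h => hjj h.symm) hs hs'
    · rintro rfl; exact ⟨hj, hne, hs⟩
  rw [partner, hset, Finset.sup_singleton]; rfl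

lemma partner_spec (τ : Finpartition (Finset.Icc 1 k))
    (no3' : ∀ x ∈ Finset.Icc 1 k, ∀ y ∈ Finset.Icc 1 k, ∀ z ∈ Finset.Icc 1 k,
      x ≠ y → x ≠ z → y ≠ z → SameBlock τ x y → SameBlock τ x z → False)
    {i : ℕ} (h : i ∈ prs τ) :
    partner τ i ∈ Finset.Icc 1 k ∧ partner τ i ≠ i ∧ SameBlock τ i (partner τ i) := by
  obtain ⟨hi, j, hj, hne, hs⟩ := mem_prs.mp h
  rw [partner_eq τ no3' hi hj hne hs]
  exact ⟨hj, hne, hs⟩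

lemma partner_mem_prs (τ : Finpartition (Finset.Icc 1 k))
    (no3' : ∀ x ∈ Finset.Icc 1 k, ∀ y ∈ Finset.Icc 1 k, ∀ z ∈ Finset.Icc 1 k,
      x ≠ y → x ≠ z → y ≠ z → SameBlock τ x y → SameBlock τ x z → False)
    {i : ℕ} (h : i ∈ prs τ) : partner τ i ∈ prs τ := by
  obtain ⟨hp1, hp2, hp3⟩ := partner_spec τ no3' h
  have hi : i ∈ Finset.Icc 1 k := (mem_prs.mp h).1
  exact Finset.mem_filter.mpr ⟨hp1, i, hi, Ne.symm hp2, sb_symm τ hp3⟩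

lemma partner_partner (τ : Finpartition (Finset.Icc 1 k))
    (no3' : ∀ x ∈ Finset.Icc 1 k, ∀ y ∈ Finset.Icc 1 k, ∀ z ∈ Finset.Icc 1 k,
      x ≠ y → x ≠ z → y ≠ z → SameBlock τ x y → SameBlock τ x z → False)
    {i : ℕ} (h : i ∈ prs τ) : partner τ (partner τ i) = i := by
  obtain ⟨hp1, hp2, hp3⟩ := partner_spec τ no3' h
  have hi : i ∈ Finset.Icc 1 k := (mem_prs.mp h).1
  exact partner_eq τ no3' hp1 hi (Ne.symm hp2) (sb_symm τ hp3)

/-- The pairing involution on `{1, …, 2k+2}` (as a function on values). -/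
def sfun (τ : Finpartition (Finset.Icc 1 k)) (v : ℕ) : ℕ :=
  if v % 2 = 0 ∧ v / 2 ∈ prs τ then 2 * partner τ (v / 2) else v

lemma sfun_pair (τ : Finpartition (Finset.Icc 1 k)) {i : ℕ} (h : i ∈ prs τ) :
    sfun τ (2 * i) = 2 * partner τ i := by
  have h1 : 2 * i % 2 = 0 := by omega
  have h2 : 2 * i / 2 = i := by omega
  simp [sfun, h1, h2, h]

lemma sfun_single (τ : Finpartition (Finset.Icc 1 k)) {i : ℕ} (h : i ∉ prs τ) :
    sfun τ (2 * i) = 2 * i := by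
  have h2 : 2 * i / 2 = i := by omega
  simp [sfun, h2, h]

lemma sfun_range (τ : Finpartition (Finset.Icc 1 k)) (v : ℕ) (h1 : 1 ≤ v) (h2 : v ≤ 2*k+2) :
    1 ≤ sfun τ v ∧ sfun τ v ≤ 2*k+2 := by
  rw [sfun]
  split_ifs with h
  · have := partner_le τ (v / 2)
    have := partner_pos τ h.2
    omega
  · omega

lemma sfun_invol (τ : Finpartition (Finset.Icc 1 k))
    (no3' : ∀ x ∈ Finset.Icc 1 k, ∀ y ∈ Finset.Icc 1 k, ∀ z ∈ Finset.Icc 1 k,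
      x ≠ y → x ≠ z → y ≠ z → SameBlock τ x y → SameBlock τ x z → False)
    (v : ℕ) : sfun τ (sfun τ v) = v := by
  by_cases h : v % 2 = 0 ∧ v / 2 ∈ prs τ
  · obtain ⟨he, hm⟩ := h
    have hv : v = 2 * (v / 2) := by omega
    rw [hv, sfun_pair τ hm, sfun_pair τ (partner_mem_prs τ no3' hm), partner_partner τ no3' hm]
  · have hfix : sfun τ v = v := by rw [sfun, if_neg h]
    rw [hfix, hfix]

/-- The pairing involution as a map on `Fin (2k+2)` (0-based indices). -/
def gfun (τ : Finpartition (Finset.Icc 1 k)) (x : Fin (2*k+2)) : Fin (2*k+2) :=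
  ⟨sfun τ ((x : ℕ) + 1) - 1, by
    have hx := x.2
    have := sfun_range τ ((x : ℕ) + 1) (by omega) (by omega)
    omega⟩

lemma gfun_invol (τ : Finpartition (Finset.Icc 1 k))
    (hinv : ∀ v, sfun τ (sfun τ v) = v) : Function.Involutive (gfun τ) := by
  intro x
  have hx := x.2
  have hr := sfun_range τ ((x : ℕ) + 1) (by omega) (by omega)
  apply Fin.ext
  show sfun τ ((sfun τ ((x : ℕ) + 1) - 1) + 1) - 1 = (x : ℕ)
  rw [Nat.sub_add_cancel hr.1, hinv]
  omega

section PermPartition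

variable {m : ℕ} (π : Equiv.Perm (Fin m))

/-- A block of the permutation partition. -/
def blk (i : Fin m) : Finset ℕ := {(i : ℕ) + 1, m + (π i : ℕ) + 1}

lemma mem_blk_left {u : ℕ} (i : Fin m) (h1 : 1 ≤ u) (h2 : u ≤ m) :
    u ∈ blk π i ↔ (i : ℕ) = u - 1 := by
  have hπ := (π i).2
  simp only [blk, Finset.mem_insert, Finset.mem_singleton]
  constructor
  · rintro (h | h) <;> omega
  · intro h; left; omega

lemma mem_blk_right {w : ℕ} (i : Fin m) (h1 : 1 ≤ w) :
    m + w ∈ blk π i ↔ (π i : ℕ) + 1 = w := by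
  have hi := i.2
  simp only [blk, Finset.mem_insert, Finset.mem_singleton]
  constructor
  · rintro (h | h) <;> omega
  · intro h; right; omega

/-- The permutation partition of `[2m]` associated to `π`. -/
def permPartition : Finpartition (Finset.Icc 1 (2 * m)) where
  parts := Finset.univ.image (blk π)
  supIndep := by
    rw [Finset.supIndep_iff_pairwiseDisjoint]
    intro B hB B' hB' hne
    simp only [Finset.coe_image, Set.mem_image, Finset.mem_coe] at hB hB'
    obtain ⟨i, -, rfl⟩ := hB
    obtain ⟨j, -, rfl⟩ := hB'
    simp only [Function.onFun, id]
    rw [Finset.disjoint_left]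
    intro v hvi hvj
    simp only [blk, Finset.mem_insert, Finset.mem_singleton] at hvi hvj
    have hi2 := i.2
    have hj2 := j.2
    have hπi := (π i).2
    have hπj := (π j).2
    have hij : i = j := by
      rcases hvi with rfl | rfl
      · rcases hvj with h | h
        · exact Fin.ext (by omega)
        · omega
      · rcases hvj with h | h
        · omega
        · exact π.injective (Fin.ext (by omega))
    exact hne (by rw [hij])
  sup_parts := by
    ext v
    rw [Finset.mem_sup]
    constructor
    · rintro ⟨B, hB, hv⟩
      obtain ⟨i, -, rfl⟩ := Finset.mem_image.mp hB
      simp only [id, blk, Finset.mem_insert, Finset.mem_singleton] at hv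
      have hi2 := i.2
      have hπi := (π i).2
      rw [Finset.mem_Icc]
      rcases hv with rfl | rfl <;> omega
    · intro hv
      rw [Finset.mem_Icc] at hv
      by_cases hle : v ≤ m
      · have hm0 : 0 < m := by omega
        refine ⟨blk π ⟨v - 1, by omega⟩, Finset.mem_image_of_mem _ (Finset.mem_univ _), ?_⟩
        show v ∈ blk π _
        rw [mem_blk_left π _ (by omega) hle]
      · have hm0 : 0 < m := by omega
        set i := π.symm ⟨v - m - 1, by omega⟩ with hidef
        refine ⟨blk π i, Finset.mem_image_of_mem _ (Finset.mem_univ _), ?_⟩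
        show v ∈ blk π i
        have hval : v = m + (v - m) := by omega
        rw [hval, mem_blk_right π i (by omega)]
        rw [hidef, Equiv.apply_symm_apply]
        show v - m - 1 + 1 = v - m
        omega
  bot_notMem := by
    intro h
    obtain ⟨i, -, hi⟩ := Finset.mem_image.mp h
    have : (i : ℕ) + 1 ∈ (⊥ : Finset ℕ) := by
      rw [← hi]; simp [blk]
    simp at this

lemma isPermPartition : IsPermPartition m π (permPartition π) := rfl

lemma permPartition_blk_mem (i : Fin m) : blk π i ∈ (permPartition π).parts :=
  Finset.mem_image_of_mem _ (Finset.mem_univ i)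

lemma permPartition_blocks {B : Finset ℕ} (hB : B ∈ (permPartition π).parts) :
    ∃ i : Fin m, B = blk π i := by
  obtain ⟨i, -, rfl⟩ := Finset.mem_image.mp hB
  exact ⟨i, rfl⟩

lemma sb_left_left {u u' : ℕ} (h1 : 1 ≤ u) (h2 : u ≤ m) (h3 : 1 ≤ u') (h4 : u' ≤ m) :
    SameBlock (permPartition π) u u' ↔ u = u' := by
  constructor
  · rintro ⟨B, hB, hu, hu'⟩
    obtain ⟨i, rfl⟩ := permPartition_blocks π hB
    rw [mem_blk_left π i h1 h2] at hu
    rw [mem_blk_left π i h3 h4] at hu'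
    omega
  · rintro rfl
    have hm0 : 0 < m := by omega
    exact ⟨blk π ⟨u - 1, by omega⟩, permPartition_blk_mem π _,
      (mem_blk_left π _ h1 h2).mpr rfl, (mem_blk_left π _ h1 h2).mpr rfl⟩

lemma sb_left_right {w : ℕ} (i : Fin m) (h3 : 1 ≤ w) :
    SameBlock (permPartition π) ((i : ℕ) + 1) (m + w) ↔ (π i : ℕ) + 1 = w := by
  have hi2 := i.2
  constructor
  · rintro ⟨B, hB, hu, hw⟩
    obtain ⟨j, rfl⟩ := permPartition_blocks π hB
    rw [mem_blk_left π j (by omega) (by omega)] at hu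
    rw [mem_blk_right π j h3] at hw
    have hij : j = i := Fin.ext (by omega)
    rw [← hij]; exact hw
  · intro h
    exact ⟨blk π i, permPartition_blk_mem π _,
      by simp [blk], (mem_blk_right π i h3).mpr h⟩

lemma sb_right_right {w w' : ℕ} (h1 : 1 ≤ w) (h2 : w ≤ m) (h3 : 1 ≤ w') (h4 : w' ≤ m) :
    SameBlock (permPartition π) (m + w) (m + w') ↔ w = w' := by
  constructor
  · rintro ⟨B, hB, hw, hw'⟩
    obtain ⟨i, rfl⟩ := permPartition_blocks π hB
    rw [mem_blk_right π i h1] at hw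
    rw [mem_blk_right π i h3] at hw'
    omega
  · rintro rfl
    have hm0 : 0 < m := by omega
    refine ⟨blk π (π.symm ⟨w - 1, by omega⟩), permPartition_blk_mem π _, ?_, ?_⟩ <;>
    · rw [mem_blk_right π _ h1, Equiv.apply_symm_apply]
      show w - 1 + 1 = w
      omega

end PermPartition

end ContainedPermAux

/-- If a set partition `τ` of `[k]` avoids both `123` and `12/34`, then `τ`
is contained in the permutation partition of `[2m]` associated to some permutation of `[m]`. -/
theorem contained_in_perm_partition (k : ℕ) (τ : Finpartition (Finset.Icc 1 k))
    (h3 : ∀ p : Finpartition (Finset.Icc 1 3), p.parts = {Finset.Icc 1 3} →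
      ¬ SetPartContains τ p)
    (h4 : ∀ p : Finpartition (Finset.Icc 1 4),
      p.parts = ({({1, 2} : Finset ℕ), ({3, 4} : Finset ℕ)} : Finset (Finset ℕ)) →
      ¬ SetPartContains τ p) :
    ∃ m : ℕ, 0 < m ∧ ∃ π : Equiv.Perm (Fin m),
      ∃ P : Finpartition (Finset.Icc 1 (2 * m)),
        IsPermPartition m π P ∧ SetPartContains P τ := by
  have no3 := ContainedPermAux.no3 τ h3
  have no3' := ContainedPermAux.no3' τ no3
  have nosep := ContainedPermAux.noSep τ h4 no3
  have hsinv := ContainedPermAux.sfun_invol τ no3'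
  -- the permutation
  let π : Equiv.Perm (Fin (2*k+2)) :=
    Function.Involutive.toPerm (ContainedPermAux.gfun τ) (ContainedPermAux.gfun_invol τ hsinv)
  have hπval : ∀ x : Fin (2*k+2), (π x : ℕ) = ContainedPermAux.sfun τ ((x : ℕ) + 1) - 1 :=
    fun _ => rfl
  refine ⟨2*k+2, by omega, π, ContainedPermAux.permPartition π,
    ContainedPermAux.isPermPartition π, ?_⟩
  -- the threshold t
  set L := (Finset.Icc 1 k).filter
      (fun i => ∃ j ∈ Finset.Icc 1 k, i < j ∧ SameBlock τ i j) with hLdef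
  set t := L.sup id with htdef
  have hmemL : ∀ i ∈ Finset.Icc 1 k, ∀ j ∈ Finset.Icc 1 k, i < j → SameBlock τ i j → i ≤ t := by
    intro i hi j hj hij hs
    exact Finset.le_sup (f := id) (Finset.mem_filter.mpr ⟨hi, j, hj, hij, hs⟩)
  have hRt : ∀ j ∈ Finset.Icc 1 k, ∀ i ∈ Finset.Icc 1 k, i < j → SameBlock τ i j → t < j := by
    intro j hj i' hi' hij hsij
    have hj1 : 1 ≤ j := (Finset.mem_Icc.mp hj).1
    rw [htdef, Finset.sup_lt_iff (by rw [Nat.bot_eq_zero]; omega : (⊥ : ℕ) < j)]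
    intro l hl
    rw [hLdef, Finset.mem_filter] at hl
    obtain ⟨hlIcc, j', hj', hlj', hslj'⟩ := hl
    show id l < j
    simp only [id]
    by_contra hge
    push_neg at hge
    rcases eq_or_lt_of_le hge with heq | hlt
    · subst heq
      exact ContainedPermAux.no3 τ h3 i' hi' j hj j' hj' hij hlj' hsij hslj'
    · exact nosep i' hi' j hj l hlIcc j' hj' hij hlt hlj' hsij hslj'
  -- the embedding
  set f : ℕ → ℕ := fun i => if i ≤ t then 2*i else (2*k+2) + 2*i with hfdef
  have hf1 : ∀ i ∈ Finset.Icc 1 k, f i ∈ Finset.Icc 1 (2*(2*k+2)) := by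
    intro i hi
    rw [Finset.mem_Icc] at hi ⊢
    rw [hfdef]
    simp only
    split_ifs <;> omega
  have hfle : ∀ i, i ≤ t → f i = 2*i := by
    intro i h; rw [hfdef]; simp only; rw [if_pos h]
  have hfgt : ∀ i, ¬ i ≤ t → f i = (2*k+2) + 2*i := by
    intro i h; rw [hfdef]; simp only; rw [if_neg h]
  -- value of π on even positions
  have hπeven : ∀ (i : ℕ) (h1 : 1 ≤ i) (h2 : i ≤ k),
      (π (⟨2*i - 1, by omega⟩ : Fin (2*k+2)) : ℕ) + 1 = ContainedPermAux.sfun τ (2*i) := by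
    intro i h1 h2
    rw [hπval]
    have harg : (((⟨2*i - 1, by omega⟩ : Fin (2*k+2)) : ℕ)) + 1 = 2*i := by
      show 2*i - 1 + 1 = 2*i
      omega
    rw [harg]
    have := ContainedPermAux.sfun_range τ (2*i) (by omega) (by omega)
    omega
  -- the key equivalence for i < j
  have hkey : ∀ i ∈ Finset.Icc 1 k, ∀ j ∈ Finset.Icc 1 k, i < j →
      (SameBlock τ i j ↔ SameBlock (ContainedPermAux.permPartition π) (f i) (f j)) := by
    intro i hi j hj hij
    have hi' := Finset.mem_Icc.mp hi
    have hj' := Finset.mem_Icc.mp hj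
    by_cases hjt : j ≤ t
    · have hit : i ≤ t := le_trans (le_of_lt hij) hjt
      rw [hfle i hit, hfle j hjt,
        ContainedPermAux.sb_left_left π (by omega) (by omega) (by omega) (by omega)]
      apply iff_of_false
      · intro hs
        have := hRt j hj i hi hij hs
        omega
      · omega
    · by_cases hit : i ≤ t
      · rw [hfle i hit, hfgt j hjt]
        have h2i : (2*i) = ((⟨2*i - 1, by omega⟩ : Fin (2*k+2)) : ℕ) + 1 := by
          show 2*i = 2*i - 1 + 1
          omega
        rw [h2i, ContainedPermAux.sb_left_right π _ (by omega : 1 ≤ 2*j),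
          hπeven i (by omega) (by omega)]
        constructor
        · intro hs
          have hiprs : i ∈ ContainedPermAux.prs τ :=
            ContainedPermAux.mem_prs.mpr ⟨hi, j, hj, by omega, hs⟩
          rw [ContainedPermAux.sfun_pair τ hiprs,
            ContainedPermAux.partner_eq τ no3' hi hj (by omega) hs]
        · intro hsf
          by_cases hiprs : i ∈ ContainedPermAux.prs τ
          · rw [ContainedPermAux.sfun_pair τ hiprs] at hsf
            have hpj : ContainedPermAux.partner τ i = j := by omega
            have := (ContainedPermAux.partner_spec τ no3' hiprs).2.2
            rwa [hpj] at this
          · rw [ContainedPermAux.sfun_single τ hiprs] at hsf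
            exact absurd hsf (by omega)
      · rw [hfgt i hit, hfgt j hjt,
          ContainedPermAux.sb_right_right π (by omega) (by omega) (by omega) (by omega)]
        apply iff_of_false
        · intro hs
          exact hit (hmemL i hi j hj hij hs)
        · omega
  refine ⟨f, hf1, ?_, ?_⟩
  · intro i hi j hj hij
    rw [Finset.mem_Icc] at hi hj
    rw [hfdef]
    simp only
    split_ifs <;> omega
  · intro i hi j hj
    rcases lt_trichotomy i j with h | h | h
    · exact hkey i hi j hj h
    · subst h
      exact iff_of_true (ContainedPermAux.sb_refl τ hi)
        (ContainedPermAux.sb_refl (ContainedPermAux.permPartition π) (hf1 i hi))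
    · have hsym := hkey j hj i hi h
      constructor
      · intro hs
        exact ContainedPermAux.sb_symm _ (hsym.mp (ContainedPermAux.sb_symm τ hs))
      · intro hs
        exact ContainedPermAux.sb_symm τ (hsym.mpr (ContainedPermAux.sb_symm _ hs))
end

section
/- Let σ be a permutation of [n] and σ' a permutation of [k]. The permutation partition of [2n] associated to σ contains the permutation partition of [2k] associated to σ' if and only if σ contains σ' as a pattern, i.e. there is a strictly increasing function g : [k] → [n] such that for all i, j ∈ [k], σ'(i) < σ'(j) if and only if σ(g(i)) < σ(g(j)). -/
lemma sameBlock_perm_iff {m : ℕ} {π : Equiv.Perm (Fin m)}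
    {P : Finpartition (Finset.Icc 1 (2 * m))} (hP : IsPermPartition m π P) (a b : ℕ) :
    SameBlock P a b ↔ ∃ i : Fin m,
      (a = (i : ℕ) + 1 ∨ a = m + (π i : ℕ) + 1) ∧
      (b = (i : ℕ) + 1 ∨ b = m + (π i : ℕ) + 1) := by
  unfold SameBlock
  rw [hP]
  constructor
  · rintro ⟨B, hB, ha, hb⟩
    simp only [Finset.mem_image, Finset.mem_univ, true_and] at hB
    obtain ⟨i, rfl⟩ := hB
    simp only [Finset.mem_insert, Finset.mem_singleton] at ha hb
    exact ⟨i, ha, hb⟩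
  · rintro ⟨i, ha, hb⟩
    refine ⟨_, Finset.mem_image_of_mem _ (Finset.mem_univ i), ?_, ?_⟩ <;>
      simp only [Finset.mem_insert, Finset.mem_singleton] <;> tauto

/-- The permutation partition of `[2n]` associated to `σ` contains the
permutation partition of `[2k]` associated to `σ'` iff `σ` contains `σ'` as a pattern. -/
theorem perm_partition_contains_iff (n k : ℕ) (σ : Equiv.Perm (Fin n))
    (σ' : Equiv.Perm (Fin k))
    (P : Finpartition (Finset.Icc 1 (2 * n))) (P' : Finpartition (Finset.Icc 1 (2 * k)))
    (hP : IsPermPartition n σ P) (hP' : IsPermPartition k σ' P') :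
    SetPartContains P P' ↔
      ∃ g : Fin k → Fin n, StrictMono g ∧
        ∀ i j : Fin k, σ' i < σ' j ↔ σ (g i) < σ (g j) := by
  constructor
  · rintro ⟨f, hmem, hmono, hsb⟩
    have hmem1 : ∀ i : Fin k, (i : ℕ) + 1 ∈ Finset.Icc 1 (2 * k) := by
      intro i; have := i.isLt; simp only [Finset.mem_Icc]; omega
    have hmem2 : ∀ i : Fin k, k + (σ' i : ℕ) + 1 ∈ Finset.Icc 1 (2 * k) := by
      intro i; have := (σ' i).isLt; simp only [Finset.mem_Icc]; omega
    have key : ∀ i : Fin k, ∃ a : Fin n,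
        f ((i : ℕ) + 1) = (a : ℕ) + 1 ∧ f (k + (σ' i : ℕ) + 1) = n + (σ a : ℕ) + 1 := by
      intro i
      have hsb' : SameBlock P (f ((i : ℕ) + 1)) (f (k + (σ' i : ℕ) + 1)) := by
        refine (hsb _ (hmem1 i) _ (hmem2 i)).mp ?_
        exact (sameBlock_perm_iff hP' _ _).mpr ⟨i, Or.inl rfl, Or.inr rfl⟩
      obtain ⟨a, ha, hb⟩ := (sameBlock_perm_iff hP _ _).mp hsb'
      have hlt : f ((i : ℕ) + 1) < f (k + (σ' i : ℕ) + 1) :=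
        hmono _ (hmem1 i) _ (hmem2 i) (by have := i.isLt; omega)
      have han := a.isLt; have hsan := (σ a).isLt
      rcases ha with ha | ha <;> rcases hb with hb | hb
      · omega
      · exact ⟨a, ha, hb⟩
      · omega
      · omega
    choose g hg1 hg2 using key
    have frefl : ∀ a ∈ Finset.Icc 1 (2 * k), ∀ b ∈ Finset.Icc 1 (2 * k), (f a < f b ↔ a < b) := by
      intro a ha b hb
      constructor
      · intro h
        rcases lt_trichotomy a b with h' | rfl | h'
        · exact h'
        · omega
        · exact absurd (hmono _ hb _ ha h') (by omega)
      · exact hmono _ ha _ hb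
    refine ⟨g, ?_, ?_⟩
    · intro i j hij
      have := hmono _ (hmem1 i) _ (hmem1 j) (by exact Nat.add_lt_add_right hij 1)
      rw [hg1 i, hg1 j] at this
      exact show (g i : ℕ) < g j by omega
    · intro i j
      have h1 := frefl _ (hmem2 i) _ (hmem2 j)
      rw [hg2 i, hg2 j] at h1
      constructor
      · intro h
        have : k + (σ' i : ℕ) + 1 < k + (σ' j : ℕ) + 1 := by
          have : (σ' i : ℕ) < (σ' j : ℕ) := h
          omega
        have := h1.mpr this
        exact show (σ (g i) : ℕ) < σ (g j) by omega
      · intro h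
        have : n + (σ (g i) : ℕ) + 1 < n + (σ (g j) : ℕ) + 1 := by
          have : (σ (g i) : ℕ) < (σ (g j) : ℕ) := h
          omega
        have := h1.mp this
        exact show (σ' i : ℕ) < σ' j by omega
  · rintro ⟨g, hg, hpat⟩
    set f : ℕ → ℕ := fun m =>
      if m ≤ k then (if h : m - 1 < k then (g ⟨m - 1, h⟩ : ℕ) else 0) + 1
      else n + (if h : m - k - 1 < k then (σ (g (σ'.symm ⟨m - k - 1, h⟩)) : ℕ) else 0) + 1
      with hf
    have fval1 : ∀ m (h1 : 1 ≤ m) (h2 : m ≤ k), f m = (g ⟨m - 1, by omega⟩ : ℕ) + 1 := by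
      intro m h1 h2
      simp only [hf]
      rw [if_pos h2, dif_pos]
    have fval2 : ∀ m (h1 : k + 1 ≤ m) (h2 : m ≤ 2 * k),
        f m = n + (σ (g (σ'.symm ⟨m - k - 1, by omega⟩)) : ℕ) + 1 := by
      intro m h1 h2
      simp only [hf]
      rw [if_neg (by omega), dif_pos]
    have hginj : ∀ x y : Fin k, (g x : ℕ) = (g y : ℕ) → x = y := fun x y h =>
      hg.injective (Fin.ext h)
    have hσinj : ∀ x y : Fin n, (σ x : ℕ) = (σ y : ℕ) → x = y := fun x y h =>
      σ.injective (Fin.ext h)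
    have hgmono : ∀ x y : Fin k, (x : ℕ) < (y : ℕ) → (g x : ℕ) < (g y : ℕ) := fun x y h =>
      hg h
    have hhalf2 : ∀ x y : Fin k, (x : ℕ) < (y : ℕ) →
        (σ (g (σ'.symm x)) : ℕ) < (σ (g (σ'.symm y)) : ℕ) := by
      intro x y h
      have hx : σ' (σ'.symm x) < σ' (σ'.symm y) := by
        rw [Equiv.apply_symm_apply, Equiv.apply_symm_apply]
        exact Fin.lt_def.mpr h
      exact Fin.lt_def.mp ((hpat _ _).mp hx)
    refine ⟨f, ?_, ?_, ?_⟩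
    · intro m hm
      simp only [Finset.mem_Icc] at hm ⊢
      rcases le_or_gt m k with h | h
      · rw [fval1 m hm.1 h]
        have := (g ⟨m - 1, by omega⟩).isLt
        omega
      · rw [fval2 m (by omega) hm.2]
        have := (σ (g (σ'.symm ⟨m - k - 1, by omega⟩))).isLt
        omega
    · intro a ha b hb hab
      simp only [Finset.mem_Icc] at ha hb
      rcases le_or_gt a k with h1 | h1 <;> rcases le_or_gt b k with h2 | h2
      · rw [fval1 a ha.1 h1, fval1 b hb.1 h2]
        have := hgmono ⟨a - 1, by omega⟩ ⟨b - 1, by omega⟩ (show a - 1 < b - 1 by omega)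
        omega
      · rw [fval1 a ha.1 h1, fval2 b (by omega) hb.2]
        have := (g ⟨a - 1, by omega⟩).isLt
        omega
      · omega
      · rw [fval2 a (by omega) ha.2, fval2 b (by omega) hb.2]
        have := hhalf2 ⟨a - k - 1, by omega⟩ ⟨b - k - 1, by omega⟩ (show a - k - 1 < b - k - 1 by omega)
        omega
    · intro a ha b hb
      simp only [Finset.mem_Icc] at ha hb
      rw [sameBlock_perm_iff hP', sameBlock_perm_iff hP]
      rcases le_or_gt a k with h1 | h1 <;> rcases le_or_gt b k with h2 | h2
      · -- both in first half: iff a = b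
        rw [fval1 a ha.1 h1, fval1 b hb.1 h2]
        constructor
        · rintro ⟨c, hc1 | hc1, hc2 | hc2⟩
          · -- a = c+1, b = c+1 : so a = b
            refine ⟨g ⟨a - 1, by omega⟩, Or.inl rfl, Or.inl ?_⟩
            have e : (⟨b - 1, by omega⟩ : Fin k) = ⟨a - 1, by omega⟩ :=
              Fin.ext (show b - 1 = a - 1 by omega)
            rw [e]
          · exact absurd hc2 (by have := (σ' c).isLt; omega)
          · exact absurd hc1 (by have := (σ' c).isLt; omega)
          · exact absurd hc1 (by have := (σ' c).isLt; omega)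
        · rintro ⟨c, hc1 | hc1, hc2 | hc2⟩
          · have e1 : (g ⟨a - 1, by omega⟩ : ℕ) = c := by omega
            have e2 : (g ⟨b - 1, by omega⟩ : ℕ) = c := by omega
            have e3 := hginj _ _ (e1.trans e2.symm)
            have hab : a - 1 = b - 1 := congrArg Fin.val e3
            have hab' : a = b := by omega
            subst hab'
            exact ⟨⟨a - 1, by omega⟩, Or.inl (show a = a - 1 + 1 by omega),
              Or.inl (show a = a - 1 + 1 by omega)⟩
          · have := (g ⟨a - 1, by omega⟩).isLt; have := (σ c).isLt; omega
          · have := (g ⟨b - 1, by omega⟩).isLt; have := (σ c).isLt; omega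
          · have := (g ⟨a - 1, by omega⟩).isLt; have := (σ c).isLt; omega
      · -- a ≤ k < b
        rw [fval1 a ha.1 h1, fval2 b (by omega) hb.2]
        constructor
        · rintro ⟨c, hc1 | hc1, hc2 | hc2⟩
          · exact absurd hc2 (by omega)
          · -- a = c + 1, b = k + σ' c + 1
            refine ⟨g ⟨a - 1, by omega⟩, Or.inl rfl, Or.inr ?_⟩
            have ec : (⟨a - 1, by omega⟩ : Fin k) = c :=
              Fin.ext (show a - 1 = (c : ℕ) by omega)
            have ed : σ'.symm ⟨b - k - 1, by omega⟩ = c := by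
              have e : (⟨b - k - 1, by omega⟩ : Fin k) = σ' c :=
                Fin.ext (show b - k - 1 = (σ' c : ℕ) by omega)
              rw [e, Equiv.symm_apply_apply]
            rw [ed, ec]
          · exact absurd hc1 (by have := (σ' c).isLt; omega)
          · exact absurd hc1 (by have := (σ' c).isLt; omega)
        · rintro ⟨c, hc1 | hc1, hc2 | hc2⟩
          · have := (σ c).isLt; omega
          · have e1 : (g ⟨a - 1, by omega⟩ : ℕ) = c := by omega
            have e2 : (σ (g (σ'.symm ⟨b - k - 1, by omega⟩)) : ℕ) = (σ c : ℕ) := by omega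
            have e3 := hσinj _ _ e2
            have e4 : g (σ'.symm ⟨b - k - 1, by omega⟩) = g ⟨a - 1, by omega⟩ := by
              rw [e3]; exact Fin.ext e1.symm
            have e5 := hg.injective e4
            have e7 : b - k - 1 = (σ' ⟨a - 1, by omega⟩ : ℕ) := by
              have e6 := congrArg (fun x => (σ' x : ℕ)) e5
              simp only [Equiv.apply_symm_apply] at e6
              exact e6
            refine ⟨⟨a - 1, by omega⟩, Or.inl (show a = a - 1 + 1 by omega), Or.inr ?_⟩
            omega
          · have := (g ⟨a - 1, by omega⟩).isLt; omega
          · have := (g ⟨a - 1, by omega⟩).isLt; have := (σ c).isLt; omega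
      · -- b ≤ k < a (symmetric)
        rw [fval2 a (by omega) ha.2, fval1 b hb.1 h2]
        constructor
        · rintro ⟨c, hc1 | hc1, hc2 | hc2⟩
          · exact absurd hc1 (by omega)
          · exact absurd hc2 (by have := (σ' c).isLt; omega)
          · refine ⟨g ⟨b - 1, by omega⟩, Or.inr ?_, Or.inl rfl⟩
            have ec : (⟨b - 1, by omega⟩ : Fin k) = c :=
              Fin.ext (show b - 1 = (c : ℕ) by omega)
            have ed : σ'.symm ⟨a - k - 1, by omega⟩ = c := by
              have e : (⟨a - k - 1, by omega⟩ : Fin k) = σ' c :=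
                Fin.ext (show a - k - 1 = (σ' c : ℕ) by omega)
              rw [e, Equiv.symm_apply_apply]
            rw [ed, ec]
          · exact absurd hc2 (by have := (σ' c).isLt; omega)
        · rintro ⟨c, hc1 | hc1, hc2 | hc2⟩
          · have := (σ c).isLt; omega
          · have := (σ c).isLt; have := (g ⟨b - 1, by omega⟩).isLt; omega
          · have e1 : (g ⟨b - 1, by omega⟩ : ℕ) = c := by omega
            have e2 : (σ (g (σ'.symm ⟨a - k - 1, by omega⟩)) : ℕ) = (σ c : ℕ) := by omega
            have e3 := hσinj _ _ e2
            have e4 : g (σ'.symm ⟨a - k - 1, by omega⟩) = g ⟨b - 1, by omega⟩ := by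
              rw [e3]; exact Fin.ext e1.symm
            have e5 := hg.injective e4
            have e7 : a - k - 1 = (σ' ⟨b - 1, by omega⟩ : ℕ) := by
              have e6 := congrArg (fun x => (σ' x : ℕ)) e5
              simp only [Equiv.apply_symm_apply] at e6
              exact e6
            refine ⟨⟨b - 1, by omega⟩, Or.inr ?_, Or.inl (show b = b - 1 + 1 by omega)⟩
            omega
          · have := (g ⟨b - 1, by omega⟩).isLt; have := (σ c).isLt; omega
      · -- both in second half: iff a = b
        rw [fval2 a (by omega) ha.2, fval2 b (by omega) hb.2]
        constructor
        · rintro ⟨c, hc1 | hc1, hc2 | hc2⟩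
          · exact absurd hc1 (by omega)
          · exact absurd hc2 (by omega)
          · exact absurd hc1 (by omega)
          · have hab : a = b := by omega
            subst hab
            exact ⟨g (σ'.symm ⟨a - k - 1, by omega⟩), Or.inr rfl, Or.inr rfl⟩
        · rintro ⟨c, hc1 | hc1, hc2 | hc2⟩
          · have := c.isLt; omega
          · have := c.isLt; omega
          · have := c.isLt; omega
          · have e2 : (σ (g (σ'.symm ⟨a - k - 1, by omega⟩)) : ℕ)
                = (σ (g (σ'.symm ⟨b - k - 1, by omega⟩)) : ℕ) := by omega
            have e3 := hg.injective (hσinj _ _ e2)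
            have e4 := σ'.symm.injective e3
            have e5 : a - k - 1 = b - k - 1 := congrArg Fin.val e4
            have hab : a = b := by omega
            subst hab
            refine ⟨σ'.symm ⟨a - k - 1, by omega⟩, Or.inr ?_, Or.inr ?_⟩ <;>
            · have e6 : (σ' (σ'.symm ⟨a - k - 1, by omega⟩) : ℕ) = a - k - 1 := by
                rw [Equiv.apply_symm_apply]
              omega
end
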